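/- Let A, B be finite types. Let μ, ν : Matrix (B × A) (B × A) ℂ and ρ, ω : Matrix A A ℂ all be positive semidefinite, and let λ, κ : ℝ with 0 ≤ λ. If (λ : ℂ) • ν - μ is positive semidefinite and (κ : ℂ) • ω - ρ is positive semidefinite, then ((λ * κ : ℝ) : ℂ) • (ν ⋆ ω) - (μ ⋆ ρ) is positive semidefinite. (This is the core of the chain-rule inequality D_max^F(𝓜(ρ)) ≤ D_max^F(ρ) + D_max^F(𝓜) for the max-relative entropy, expressed through the Choi matrices μ, ν of the channels: if μ ≤ 2^{D_max(𝓜‖𝓝)} ν and ρ ≤ 2^{D_max(ρ‖ω)} ω then 𝓜(ρ) ≤ 2^{D_max(𝓜‖𝓝)+D_max(ρ‖ω)} 𝓝(ω).) -/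

import Mathlib

open Matrix Kronecker BigOperators
open scoped ComplexOrder

/-- Link product of a bipartite matrix with a state. -/
noncomputable def linkState {S T : Type*} [Fintype T] (N : Matrix (S × T) (S × T) ℂ)
    (ρ : Matrix T T ℂ) : Matrix S S ℂ :=
  Matrix.of fun s s' => ∑ t, ∑ t', N (s, t) (s', t') * ρ t t'

lemma linkState_key {S T : Type*} [Fintype S] [Fintype T]
    (N : Matrix (S × T) (S × T) ℂ) (C : Matrix T T ℂ) (x : S → ℂ) :
    star x ⬝ᵥ (linkState N (Cᴴ * C)) *ᵥ x
        = ∑ k, star (fun p : S × T => x p.1 * C k p.2) ⬝ᵥ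
            N *ᵥ (fun p : S × T => x p.1 * C k p.2) := by
  simp only [dotProduct, mulVec, linkState, Matrix.of_apply, mul_apply,
    conjTranspose_apply, Pi.star_apply, dotProduct, Fintype.sum_prod_type,
    Finset.mul_sum, Finset.sum_mul, star_mul']
  conv_lhs => enter [2, s1, 2, s2, 2, t3]; rw [Finset.sum_comm]
  conv_lhs => enter [2, s1, 2, s2]; rw [Finset.sum_comm]
  conv_lhs => enter [2, s1]; rw [Finset.sum_comm]
  rw [Finset.sum_comm]
  refine Finset.sum_congr rfl fun i _ => Finset.sum_congr rfl fun s1 _ => ?_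
  rw [Finset.sum_comm]
  refine Finset.sum_congr rfl fun t3 _ => Finset.sum_congr rfl fun s2 _ =>
    Finset.sum_congr rfl fun t4 _ => ?_
  ring

lemma linkState_posSemidef {S T : Type*} [Fintype S] [Fintype T]
    {N : Matrix (S × T) (S × T) ℂ} {ρ : Matrix T T ℂ}
    (hN : N.PosSemidef) (hρ : ρ.PosSemidef) : (linkState N ρ).PosSemidef := by
  classical
  obtain ⟨C, rfl⟩ : ∃ C : Matrix T T ℂ, ρ = Cᴴ * C := by
    open scoped MatrixOrder in
    have h0 : 0 ≤ ρ := Matrix.nonneg_iff_posSemidef.mpr hρ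
    refine ⟨CFC.sqrt ρ, ?_⟩
    have hs : star (CFC.sqrt ρ) = CFC.sqrt ρ := (CFC.sqrt_nonneg ρ).isSelfAdjoint.star_eq
    rw [← Matrix.star_eq_conjTranspose, hs, CFC.sqrt_mul_sqrt_self ρ h0]
  refine Matrix.PosSemidef.of_dotProduct_mulVec_nonneg ?_ ?_
  · ext s s'
    simp only [linkState, conjTranspose_apply, Matrix.of_apply, star_sum,
      star_mul', mul_apply]
    rw [Finset.sum_comm]
    refine Finset.sum_congr rfl fun t _ => Finset.sum_congr rfl fun t' _ => ?_
    have hNh : ∀ p q, star (N q p) = N p q := fun p q => congrFun (congrFun hN.1 p) q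
    rw [hNh]
    simp [star_sum, mul_comm, mul_left_comm, Finset.mul_sum]
  · intro x
    rw [linkState_key]
    exact Finset.sum_nonneg fun k _ => hN.dotProduct_mulVec_nonneg _

lemma linkState_sub_right {S T : Type*} [Fintype T] (N : Matrix (S × T) (S × T) ℂ)
    (ρ σ : Matrix T T ℂ) : linkState N (ρ - σ) = linkState N ρ - linkState N σ := by
  ext s s'
  simp [linkState, mul_sub, Finset.sum_sub_distrib]

lemma linkState_sub_left {S T : Type*} [Fintype T] (N M : Matrix (S × T) (S × T) ℂ)
    (ρ : Matrix T T ℂ) : linkState (N - M) ρ = linkState N ρ - linkState M ρ := by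
  ext s s'
  simp [linkState, sub_mul, Finset.sum_sub_distrib]

lemma linkState_smul_right {S T : Type*} [Fintype T] (N : Matrix (S × T) (S × T) ℂ)
    (c : ℂ) (ρ : Matrix T T ℂ) : linkState N (c • ρ) = c • linkState N ρ := by
  ext s s'
  simp [linkState, Finset.mul_sum, mul_left_comm]

lemma linkState_smul_left {S T : Type*} [Fintype T] (N : Matrix (S × T) (S × T) ℂ)
    (c : ℂ) (ρ : Matrix T T ℂ) : linkState (c • N) ρ = c • linkState N ρ := by
  ext s s'
  simp [linkState, Finset.mul_sum, mul_assoc]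

lemma linkState_decomp {A B : Type*} [Fintype A] [Fintype B]
    (μ ν : Matrix (B × A) (B × A) ℂ) (ρ ω : Matrix A A ℂ) (lam kap : ℝ) :
    (((lam * kap : ℝ) : ℂ) • linkState ν ω - linkState μ ρ)
      = (lam : ℂ) • linkState ν ((kap : ℂ) • ω - ρ) + linkState ((lam : ℂ) • ν - μ) ρ := by
  rw [linkState_sub_right, linkState_sub_left, linkState_smul_right, linkState_smul_left,
    smul_sub, smul_smul]
  push_cast
  abel

lemma psd_smul {n : Type*} [Fintype n] {M : Matrix n n ℂ} (hM : M.PosSemidef)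
    {c : ℝ} (hc : 0 ≤ c) : ((c : ℂ) • M).PosSemidef := by
  refine Matrix.PosSemidef.of_dotProduct_mulVec_nonneg ?_ ?_
  · show ((c : ℂ) • M)ᴴ = _
    rw [Matrix.conjTranspose_smul, hM.1, Complex.star_def, Complex.conj_ofReal]
  · intro x
    rw [Matrix.smul_mulVec, dotProduct_smul]
    have h0 : (0 : ℂ) ≤ (c : ℂ) := by exact_mod_cast hc
    exact mul_nonneg h0 (hM.dotProduct_mulVec_nonneg x)

theorem stmt15 {A B : Type*} [Fintype A] [Fintype B]
    (μ ν : Matrix (B × A) (B × A) ℂ) (ρ ω : Matrix A A ℂ)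
    (hμ : μ.PosSemidef) (hν : ν.PosSemidef) (hρ : ρ.PosSemidef) (hω : ω.PosSemidef)
    (lam kap : ℝ) (hlam : 0 ≤ lam)
    (h1 : ((lam : ℂ) • ν - μ).PosSemidef)
    (h2 : ((kap : ℂ) • ω - ρ).PosSemidef) :
    (((lam * kap : ℝ) : ℂ) • linkState ν ω - linkState μ ρ).PosSemidef := by
  rw [linkState_decomp]
  exact (psd_smul (linkState_posSemidef hν h2) hlam).add (linkState_posSemidef h1 hρ)
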